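/- Let p and q be probability densities with respect to a σ-finite measure μ on X, and let V(D) = ∫ p(x) log D(x) dμ(x) + ∫ q(x) log(1 − D(x)) dμ(x) for measurable D : X → (0,1). Then the supremum of V over all such D equals −log 4 + 2·JSD(P‖Q), and it is attained at D*(x) = p(x)/(p(x)+q(x)) (defined arbitrarily where p(x)+q(x) = 0). -/

import Mathlib

open MeasureTheory
open scoped ENNReal Classical

/-- The Kullback–Leibler divergence `KL(P‖Q)`: equal to `∫ log (dP/dQ) dP` when `P ≪ Q`
(and this log-likelihood ratio is `P`-integrable), and `+∞` otherwise. -/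
noncomputable def klDiv {X : Type*} [MeasurableSpace X] (P Q : Measure X) : EReal :=
  if P ≪ Q ∧ Integrable (llr P Q) P then ((∫ x, llr P Q x ∂P : ℝ) : EReal) else ⊤

/-- The Jensen–Shannon divergence `JSD(P‖Q) = (1/2) KL(P‖M) + (1/2) KL(Q‖M)` where
`M = (1/2)(P + Q)`. -/
noncomputable def jsd {X : Type*} [MeasurableSpace X] (P Q : Measure X) : EReal :=
  (((2 : ℝ)⁻¹ : ℝ) : EReal) * klDiv P ((2 : ℝ≥0∞)⁻¹ • (P + Q))
    + (((2 : ℝ)⁻¹ : ℝ) : EReal) * klDiv Q ((2 : ℝ≥0∞)⁻¹ • (P + Q))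

private lemma aux_sub_le_mul_log {a c : ℝ} (ha : 0 ≤ a) (hc : 0 < c) :
    a - c ≤ a * Real.log (a / c) := by
  rcases eq_or_lt_of_le ha with h | h
  · simp [← h]; linarith
  · have h1 : Real.log (c / a) ≤ c / a - 1 := Real.log_le_sub_one_of_pos (by positivity)
    have h2 : Real.log (a / c) = - Real.log (c / a) := by
      rw [← Real.log_inv]; congr 1; field_simp
    have h3 : a * (c / a - 1) = c - a := by field_simp
    nlinarith [mul_le_mul_of_nonneg_left h1 ha]

private lemma aux_abs_le {a b : ℝ} (ha : 0 ≤ a) (hb : 0 ≤ b) :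
    |a * Real.log (a / (a + b))| ≤ b := by
  rcases eq_or_lt_of_le (add_nonneg ha hb) with hs | hs
  · have h0 : a = 0 := by linarith
    simp [h0, hb]
  · rw [abs_le]
    constructor
    · have := aux_sub_le_mul_log ha hs
      linarith
    · have h1 : a / (a + b) ≤ 1 := by rw [div_le_one hs]; linarith
      have h2 : Real.log (a / (a + b)) ≤ 0 := Real.log_nonpos (by positivity) h1
      nlinarith

private lemma aux_log2 {a b : ℝ} (ha : 0 ≤ a) (hb : 0 ≤ b) :
    a * Real.log (2 * a / (a + b)) = Real.log 2 * a + a * Real.log (a / (a + b)) := by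
  rcases eq_or_lt_of_le ha with h | h
  · simp [← h]
  · have hs : 0 < a + b := by linarith
    rw [mul_div_assoc, Real.log_mul (by norm_num) (ne_of_gt (div_pos h hs))]
    ring

private lemma pointwise_opt {p q D : ℝ} (hp : 0 ≤ p) (hq : 0 ≤ q) (hD0 : 0 < D) (hD1 : D < 1) :
    p * Real.log D + q * Real.log (1 - D) ≤
      p * Real.log (p / (p + q)) + q * Real.log (1 - p / (p + q)) := by
  rcases eq_or_lt_of_le (add_nonneg hp hq) with hs | hs
  · have hp0 : p = 0 := by linarith
    have hq0 : q = 0 := by linarith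
    simp [hp0, hq0]
  · have h1 : 1 - p / (p + q) = q / (p + q) := by field_simp; ring
    rw [h1]
    have c1 : p - (p + q) * D ≤ p * Real.log (p / (p + q)) - p * Real.log D := by
      rcases eq_or_lt_of_le hp with h | h
      · rw [← h]
        have := mul_nonneg hq hD0.le
        simp only [zero_mul, zero_sub, zero_add, sub_zero]
        nlinarith
      · have key := aux_sub_le_mul_log (le_of_lt h) (mul_pos hs hD0)
        have hlog : Real.log (p / ((p + q) * D)) = Real.log (p / (p + q)) - Real.log D := by
          rw [Real.log_div (ne_of_gt h) (by positivity), Real.log_div (ne_of_gt h) (ne_of_gt hs),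
            Real.log_mul (ne_of_gt hs) (ne_of_gt hD0)]
          ring
        rw [hlog, mul_sub] at key
        linarith
    have c2 : q - (p + q) * (1 - D) ≤ q * Real.log (q / (p + q)) - q * Real.log (1 - D) := by
      rcases eq_or_lt_of_le hq with h | h
      · rw [← h]
        have h1D : (0:ℝ) ≤ 1 - D := by linarith
        have := mul_nonneg (add_nonneg hp hq) h1D
        simp only [zero_mul, zero_sub, sub_zero, add_zero]
        nlinarith
      · have key := aux_sub_le_mul_log (le_of_lt h) (mul_pos hs (show (0:ℝ) < 1 - D by linarith))
        have hlog : Real.log (q / ((p + q) * (1 - D))) =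
            Real.log (q / (p + q)) - Real.log (1 - D) := by
          rw [Real.log_div (ne_of_gt h) (ne_of_gt (mul_pos hs (show (0:ℝ) < 1 - D by linarith))),
            Real.log_div (ne_of_gt h) (ne_of_gt hs),
            Real.log_mul (ne_of_gt hs) (ne_of_gt (show (0:ℝ) < 1 - D by linarith))]
          ring
        rw [hlog, mul_sub] at key
        linarith
    have hsum : (p + q) * D + (p + q) * (1 - D) = p + q := by ring
    linarith

private lemma mix_eq {X : Type*} [MeasurableSpace X] (μ : Measure X)
    (p q : X → ℝ) (hpm : Measurable p)
    (hp0 : ∀ x, 0 ≤ p x) (hq0 : ∀ x, 0 ≤ q x) :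
    (2 : ℝ≥0∞)⁻¹ • (μ.withDensity (fun x => ENNReal.ofReal (p x))
        + μ.withDensity (fun x => ENNReal.ofReal (q x)))
      = μ.withDensity (fun x => ENNReal.ofReal (2⁻¹ * (p x + q x))) := by
  have h1 : (fun x => ENNReal.ofReal (2⁻¹ * (p x + q x)))
      = (2 : ℝ≥0∞)⁻¹ • ((fun x => ENNReal.ofReal (p x)) + fun x => ENNReal.ofReal (q x)) := by
    funext x
    have : ENNReal.ofReal ((2:ℝ)⁻¹) = (2 : ℝ≥0∞)⁻¹ := by
      rw [ENNReal.ofReal_inv_of_pos (by norm_num)]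
      norm_num
    simp only [Pi.smul_apply, Pi.add_apply, smul_eq_mul]
    rw [ENNReal.ofReal_mul (by norm_num), this, ENNReal.ofReal_add (hp0 x) (hq0 x)]
  rw [h1, withDensity_smul' _ _ (by norm_num),
    withDensity_add_left hpm.ennreal_ofReal]

private lemma kl_half_mix {X : Type*} [MeasurableSpace X] (μ : Measure X) [SigmaFinite μ]
    (p q : X → ℝ) (hpm : Measurable p) (hqm : Measurable q)
    (hp0 : ∀ x, 0 ≤ p x) (hq0 : ∀ x, 0 ≤ q x)
    (hpi : Integrable p μ) (hqi : Integrable q μ) (hp1 : ∫ x, p x ∂μ = 1) :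
    klDiv (μ.withDensity fun x => ENNReal.ofReal (p x))
        (μ.withDensity fun x => ENNReal.ofReal (2⁻¹ * (p x + q x)))
      = ((Real.log 2 + ∫ x, p x * Real.log (p x / (p x + q x)) ∂μ : ℝ) : EReal) := by
  set P := μ.withDensity fun x => ENNReal.ofReal (p x) with hP
  set M := μ.withDensity fun x => ENNReal.ofReal (2⁻¹ * (p x + q x)) with hM
  set g : X → ℝ := fun x => 2 * p x / (p x + q x) with hg
  have hgm : Measurable g := (hpm.const_mul 2).div (hpm.add hqm)
  have hg0 : ∀ x, 0 ≤ g x := fun x =>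
    div_nonneg (by nlinarith [hp0 x]) (add_nonneg (hp0 x) (hq0 x))
  have hPM : P = M.withDensity fun x => ENNReal.ofReal (g x) := by
    rw [hP, hM, ← withDensity_mul μ (show Measurable (fun x => (2:ℝ)⁻¹ * (p x + q x)) from (hpm.add hqm).const_mul _).ennreal_ofReal hgm.ennreal_ofReal]
    congr 1
    funext x
    simp only [Pi.mul_apply]
    rw [← ENNReal.ofReal_mul (by have := hp0 x; have := hq0 x; linarith)]
    congr 1
    rcases eq_or_lt_of_le (add_nonneg (hp0 x) (hq0 x)) with hs | hs
    · have hp' : p x = 0 := by linarith [hp0 x, hq0 x]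
      simp [hg, hp']
    · have e : (2:ℝ)⁻¹ * (p x + q x) * g x = p x := by
        simp only [hg]; rw [mul_div_assoc', div_eq_iff hs.ne']; ring
      linarith
  haveI hMfin : IsFiniteMeasure M := by
    constructor
    rw [hM, withDensity_apply _ MeasurableSet.univ, Measure.restrict_univ]
    exact ((hpi.add hqi).const_mul _).lintegral_lt_top
  have hac : P ≪ M := hPM ▸ withDensity_absolutelyContinuous M _
  have hrn : P.rnDeriv M =ᵐ[M] fun x => ENNReal.ofReal (g x) := by
    rw [hPM]
    exact Measure.rnDeriv_withDensity M hgm.ennreal_ofReal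
  have hllr : llr P M =ᵐ[P] fun x => Real.log (g x) := by
    filter_upwards [hrn.filter_mono hac.ae_le] with x hx
    have hd : llr P M x = Real.log (P.rnDeriv M x).toReal := rfl
    rw [hd, hx, ENNReal.toReal_ofReal (hg0 x)]
  have hIpq : Integrable (fun x => p x * Real.log (p x / (p x + q x))) μ := by
    refine hqi.mono (hpm.mul ((hpm.div (hpm.add hqm)).log)).aestronglyMeasurable
      (ae_of_all _ fun x => ?_)
    rw [Real.norm_eq_abs, Real.norm_eq_abs, abs_of_nonneg (hq0 x)]
    exact aux_abs_le (hp0 x) (hq0 x)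
  have hIg : (fun x => p x * Real.log (g x))
      = fun x => Real.log 2 * p x + p x * Real.log (p x / (p x + q x)) :=
    funext fun x => aux_log2 (hp0 x) (hq0 x)
  have hIgi : Integrable (fun x => p x * Real.log (g x)) μ := by
    rw [hIg]; exact (hpi.const_mul _).add hIpq
  have hPnn : P = μ.withDensity fun x => ((Real.toNNReal (p x) : NNReal) : ℝ≥0∞) := rfl
  have hint : Integrable (llr P M) P := by
    rw [integrable_congr hllr, hPnn,
      integrable_withDensity_iff_integrable_smul hpm.real_toNNReal]
    have : (fun x => (p x).toNNReal • Real.log (g x)) = fun x => p x * Real.log (g x) := by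
      funext x
      rw [NNReal.smul_def, Real.coe_toNNReal _ (hp0 x), smul_eq_mul]
    rwa [this]
  have hInt_eq : ∫ x, llr P M x ∂P
      = Real.log 2 + ∫ x, p x * Real.log (p x / (p x + q x)) ∂μ := by
    rw [integral_congr_ae hllr, hPnn, integral_withDensity_eq_integral_smul hpm.real_toNNReal]
    have : (fun x => (p x).toNNReal • Real.log (g x)) = fun x => p x * Real.log (g x) := by
      funext x
      rw [NNReal.smul_def, Real.coe_toNNReal _ (hp0 x), smul_eq_mul]
    rw [this, hIg, integral_add (hpi.const_mul _) hIpq, integral_const_mul, hp1, mul_one]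
  rw [klDiv, if_pos ⟨hac, hint⟩, hInt_eq]

/-- The optimal GAN discriminator: for probability densities `p, q` w.r.t. a σ-finite
measure `μ`, the GAN value `V(D) = ∫ p log D dμ + ∫ q log (1 − D) dμ` over measurable
`D : X → (0,1)` is maximized by `D*(x) = p(x)/(p(x)+q(x))` (defined arbitrarily where
`p(x)+q(x) = 0`), and the supremum equals `−log 4 + 2·JSD(P‖Q)`. -/
theorem gan_value_sup_eq_jsd
    {X : Type*} [MeasurableSpace X] (μ : Measure X) [SigmaFinite μ]
    (p q : X → ℝ) (hpm : Measurable p) (hqm : Measurable q)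
    (hp0 : ∀ x, 0 ≤ p x) (hq0 : ∀ x, 0 ≤ q x)
    (hp1 : ∫ x, p x ∂μ = 1) (hq1 : ∫ x, q x ∂μ = 1) :
    -- the supremum is attained at `D*(x) = p(x)/(p(x)+q(x))` ...
    (∀ D : X → ℝ, Measurable D → (∀ x, D x ∈ Set.Ioo (0 : ℝ) 1) →
      Integrable (fun x => p x * Real.log (D x)) μ →
      Integrable (fun x => q x * Real.log (1 - D x)) μ →
      (∫ x, p x * Real.log (D x) ∂μ) + (∫ x, q x * Real.log (1 - D x) ∂μ)
        ≤ (∫ x, p x * Real.log (p x / (p x + q x)) ∂μ)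
          + (∫ x, q x * Real.log (1 - p x / (p x + q x)) ∂μ)) ∧
    -- ... and its value there is `−log 4 + 2·JSD(P‖Q)`
    ((((∫ x, p x * Real.log (p x / (p x + q x)) ∂μ)
        + (∫ x, q x * Real.log (1 - p x / (p x + q x)) ∂μ) : ℝ) : EReal)
      = ((-(Real.log 4) : ℝ) : EReal)
        + ((2 : ℝ) : EReal) * jsd (μ.withDensity (fun x => ENNReal.ofReal (p x)))
            (μ.withDensity (fun x => ENNReal.ofReal (q x)))) := by
  have hpi : Integrable p μ := by
    by_contra h; rw [integral_undef h] at hp1; norm_num at hp1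
  have hqi : Integrable q μ := by
    by_contra h; rw [integral_undef h] at hq1; norm_num at hq1
  have hIp : Integrable (fun x => p x * Real.log (p x / (p x + q x))) μ := by
    refine hqi.mono (hpm.mul ((hpm.div (hpm.add hqm)).log)).aestronglyMeasurable
      (ae_of_all _ fun x => ?_)
    rw [Real.norm_eq_abs, Real.norm_eq_abs, abs_of_nonneg (hq0 x)]
    exact aux_abs_le (hp0 x) (hq0 x)
  have hswap : (fun x => q x * Real.log (1 - p x / (p x + q x)))
      = fun x => q x * Real.log (q x / (q x + p x)) := by
    funext x
    rcases eq_or_lt_of_le (add_nonneg (hp0 x) (hq0 x)) with hs | hs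
    · have hq' : q x = 0 := by linarith [hp0 x, hq0 x]
      simp [hq']
    · have h1 : p x + q x ≠ 0 := ne_of_gt hs
      have h2 : q x + p x ≠ 0 := by rw [add_comm]; exact h1
      have h : 1 - p x / (p x + q x) = q x / (q x + p x) := by
        field_simp
        ring
      rw [h]
  have hIq : Integrable (fun x => q x * Real.log (1 - p x / (p x + q x))) μ := by
    rw [hswap]
    refine hpi.mono (hqm.mul ((hqm.div (hqm.add hpm)).log)).aestronglyMeasurable
      (ae_of_all _ fun x => ?_)
    rw [Real.norm_eq_abs, Real.norm_eq_abs, abs_of_nonneg (hp0 x)]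
    exact aux_abs_le (hq0 x) (hp0 x)
  constructor
  · intro D hDm hD hi1 hi2
    rw [← integral_add hi1 hi2, ← integral_add hIp hIq]
    exact integral_mono (hi1.add hi2) (hIp.add hIq)
      (fun x => pointwise_opt (hp0 x) (hq0 x) (hD x).1 (hD x).2)
  · rw [hswap]
    have hmix := mix_eq μ p q hpm hp0 hq0
    have hmix' : (fun x => ENNReal.ofReal (2⁻¹ * (p x + q x)))
        = fun x => ENNReal.ofReal (2⁻¹ * (q x + p x)) := by
      funext x; rw [add_comm (p x)]
    have k1 := kl_half_mix μ p q hpm hqm hp0 hq0 hpi hqi hp1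
    have k2 := kl_half_mix μ q p hqm hpm hq0 hp0 hqi hpi hq1
    rw [jsd, hmix, k1, hmix', k2]
    norm_cast
    have h4 : Real.log 4 = 2 * Real.log 2 := by
      rw [show (4:ℝ) = 2^2 by norm_num, Real.log_pow]
      norm_num
    rw [h4]
    ring
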